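/- arXiv:2409.10634 — 2 statements merged into one kernel-verified Lean document; each statement's English description precedes it below -/
import Mathlib

section
/- If A ⊆ F_2^n has coset complexity at most ℓ (i.e., A belongs to the ring of sets generated by at most ℓ cosets of subgroups), then 1_A can be written as ∑_{i=1}^{t} ε_i · 1_{W_i + a_i} with ε_i ∈ {−1, 1}, each W_i + a_i a coset, and t ≤ 3^ℓ. In particular, ‖1_A‖_A ≤ 3^ℓ. -/
open Finset
open scoped Classical

noncomputable def chi {n : ℕ} (a x : Fin n → ZMod 2) : ℝ :=
  if ∑ i, a i * x i = (0 : ZMod 2) then 1 else -1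

noncomputable def fhat {n : ℕ} (f : (Fin n → ZMod 2) → ℝ) (a : Fin n → ZMod 2) : ℝ :=
  (∑ x, f x * chi a x) / 2 ^ n

noncomputable def specNorm {n : ℕ} (f : (Fin n → ZMod 2) → ℝ) : ℝ :=
  ∑ a, |fhat f a|

noncomputable def ind {n : ℕ} (A : Set (Fin n → ZMod 2)) : (Fin n → ZMod 2) → ℝ :=
  fun x => if x ∈ A then 1 else 0

def IsCoset {n : ℕ} (C : Set (Fin n → ZMod 2)) : Prop :=
  ∃ (W : Submodule (ZMod 2) (Fin n → ZMod 2)) (c : Fin n → ZMod 2),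
    C = {x | x - c ∈ W}

/-- The ring of sets generated by a family `S` of sets: contains the members of `S`
and the full space, and is closed under complements, unions and intersections. -/
inductive InSetRing {α : Type*} (S : Set (Set α)) : Set α → Prop
  | base {A : Set α} : A ∈ S → InSetRing S A
  | univ : InSetRing S Set.univ
  | compl {A : Set α} : InSetRing S A → InSetRing S Aᶜ
  | union {A B : Set α} : InSetRing S A → InSetRing S B → InSetRing S (A ∪ B)
  | inter {A B : Set α} : InSetRing S A → InSetRing S B → InSetRing S (A ∩ B)

/-- `A` has coset complexity at most `ℓ`. -/
def CosetCplxLe {n : ℕ} (A : Set (Fin n → ZMod 2)) (ℓ : ℕ) : Prop :=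
  ∃ (t : ℕ) (C : Fin t → Set (Fin n → ZMod 2)),
    t ≤ ℓ ∧ (∀ i, IsCoset (C i)) ∧ InSetRing (Set.range C) A

lemma zmod2_ne_zero {u : ZMod 2} (h : u ≠ 0) : u = 1 := by revert u; decide

lemma chi_mul_chi {n : ℕ} (a x y : Fin n → ZMod 2) :
    chi a x * chi a y = chi a (x + y) := by
  unfold chi
  simp only [Pi.add_apply]
  have hsum : (∑ i, a i * (x i + y i)) = (∑ i, a i * x i) + ∑ i, a i * y i := by
    rw [← Finset.sum_add_distrib]; congr 1; funext i; ring
  rw [hsum]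
  by_cases h1 : ∑ i, a i * x i = 0 <;> by_cases h2 : ∑ i, a i * y i = 0
  · simp [h1, h2]
  · simp [h1, h2]
  · simp [h1, h2]
  · rw [zmod2_ne_zero h1, zmod2_ne_zero h2]
    have : (1+1 : ZMod 2) = 0 := by decide
    rw [this]
    norm_num

lemma chi_symm {n : ℕ} (a x : Fin n → ZMod 2) : chi a x = chi x a := by
  unfold chi
  congr 1
  simp [mul_comm]

lemma chi_eq_one_or {n : ℕ} (a x : Fin n → ZMod 2) : chi a x = 1 ∨ chi a x = -1 := by
  unfold chi; split <;> simp

lemma abs_chi {n : ℕ} (a x : Fin n → ZMod 2) : |chi a x| = 1 := by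
  rcases chi_eq_one_or a x with h | h <;> simp [h]

lemma chi_zero_right {n : ℕ} (a : Fin n → ZMod 2) : chi a 0 = 1 := by
  simp [chi]

lemma card_group {n : ℕ} : Fintype.card (Fin n → ZMod 2) = 2 ^ n := by
  simp [Fintype.card_fun]

lemma sum_chi {n : ℕ} (z : Fin n → ZMod 2) :
    ∑ a, chi a z = if z = 0 then (2 : ℝ) ^ n else 0 := by
  by_cases hz : z = 0
  · subst hz
    simp [chi_zero_right, card_group]
  · simp only [hz, if_false]
    obtain ⟨i0, hi0⟩ : ∃ i0, z i0 ≠ 0 := by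
      by_contra hc
      push_neg at hc
      exact hz (funext fun i => hc i)
    set d : Fin n → ZMod 2 := fun j => if j = i0 then 1 else 0 with hd
    have hdz : chi d z = -1 := by
      unfold chi
      have : ∑ i, d i * z i = z i0 := by
        rw [hd]
        simp [Finset.sum_ite_eq']
      rw [this, zmod2_ne_zero hi0]
      norm_num
    have hre : ∑ a, chi a z = ∑ a, chi (a + d) z := by
      exact (Fintype.sum_equiv (Equiv.addRight d) _ _ (fun a => rfl)).symm
    have hstep : ∀ a, chi (a + d) z = - chi a z := by
      intro a
      rw [chi_symm, ← chi_mul_chi z a d, chi_symm z a, chi_symm z d, hdz]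
      ring
    have : ∑ a, chi a z = - ∑ a, chi a z := by
      calc ∑ a, chi a z = ∑ a, chi (a + d) z := hre
        _ = ∑ a, -chi a z := Finset.sum_congr rfl (fun a _ => hstep a)
        _ = - ∑ a, chi a z := by rw [Finset.sum_neg_distrib]
    linarith


lemma pi2_add_eq_zero_iff {n : ℕ} (x y : Fin n → ZMod 2) : x + y = 0 ↔ x = y := by
  have h2 : ∀ u v : ZMod 2, u + v = 0 ↔ u = v := by decide
  constructor
  · intro h; funext i; exact (h2 _ _).1 (congrFun h i)
  · intro h; funext i; exact (h2 _ _).2 (congrFun h i)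

lemma two_pow_ne {n : ℕ} : ((2 : ℝ) ^ n) ≠ 0 := by positivity

lemma parseval {n : ℕ} (f : (Fin n → ZMod 2) → ℝ) :
    ∑ a, (fhat f a) ^ 2 = (∑ x, f x ^ 2) / 2 ^ n := by
  have key : ∀ x y : Fin n → ZMod 2,
      ∑ a, chi a x * chi a y = if y = x then (2 : ℝ) ^ n else 0 := by
    intro x y
    calc ∑ a, chi a x * chi a y = ∑ a, chi a (x + y) := by
          exact Finset.sum_congr rfl fun a _ => chi_mul_chi a x y
      _ = if x + y = 0 then (2 : ℝ) ^ n else 0 := sum_chi _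
      _ = _ := by simp only [pi2_add_eq_zero_iff]; by_cases h : x = y <;> simp [h, eq_comm]
  have step1 : ∀ a, (fhat f a) ^ 2
      = (∑ x, ∑ y, f x * f y * (chi a x * chi a y)) / (2 ^ n * 2 ^ n) := by
    intro a
    unfold fhat
    rw [div_pow, pow_two, pow_two, Finset.sum_mul_sum]
    have : ∀ x y : Fin n → ZMod 2,
        f x * chi a x * (f y * chi a y) = f x * f y * (chi a x * chi a y) := by
      intro x y; ring
    simp only [this]
  calc ∑ a, (fhat f a) ^ 2
      = (∑ a, ∑ x, ∑ y, f x * f y * (chi a x * chi a y)) / (2 ^ n * 2 ^ n) := by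
        simp only [step1]; rw [Finset.sum_div]
    _ = (∑ x, ∑ y, f x * f y * ∑ a, chi a x * chi a y) / (2 ^ n * 2 ^ n) := by
        congr 1
        rw [Finset.sum_comm]
        refine Finset.sum_congr rfl fun x _ => ?_
        rw [Finset.sum_comm]
        refine Finset.sum_congr rfl fun y _ => ?_
        rw [Finset.mul_sum]
    _ = (∑ x, f x * f x * 2 ^ n) / (2 ^ n * 2 ^ n) := by
        congr 1
        refine Finset.sum_congr rfl fun x _ => ?_
        simp only [key, mul_ite, mul_zero]
        rw [Finset.sum_ite_eq' Finset.univ x, if_pos (Finset.mem_univ x)]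
    _ = (∑ x, f x ^ 2) / 2 ^ n := by
        rw [← Finset.sum_mul]
        rw [show ∀ S : ℝ, S * 2^n / (2^n * 2^n) = S / 2^n by
          intro S; field_simp]
        congr 1
        exact Finset.sum_congr rfl fun x _ => (sq (f x)).symm

lemma sum_ite_const {α : Type*} [Fintype α] (p : α → Prop) (r : ℝ) :
    ∑ a, (if p a then r else 0) = ((Finset.univ.filter p).card : ℝ) * r := by
  rw [Finset.sum_ite, Finset.sum_const, Finset.sum_const_zero, add_zero, nsmul_eq_mul]


section coset
variable {n : ℕ} (W : Submodule (ZMod 2) (Fin n → ZMod 2))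

lemma fhat_ind_W (a : Fin n → ZMod 2) :
    fhat (ind (W : Set (Fin n → ZMod 2))) a =
      if (∀ w ∈ W, ∑ i, a i * w i = 0) then
        ((Finset.univ.filter (fun x => x ∈ W)).card : ℝ) / 2 ^ n
      else 0 := by
  unfold fhat
  by_cases hK : ∀ w ∈ W, ∑ i, a i * w i = 0
  · rw [if_pos hK]
    congr 1
    rw [← Finset.sum_boole]
    refine Finset.sum_congr rfl fun x _ => ?_
    by_cases hx : x ∈ W
    · have : chi a x = 1 := by unfold chi; rw [if_pos (hK x hx)]
      simp [ind, hx, this]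
    · simp [ind, hx]
  · rw [if_neg hK]
    push_neg at hK
    obtain ⟨w0, hw0, hne⟩ := hK
    have hchi : chi a w0 = -1 := by unfold chi; rw [if_neg hne]
    have hre : ∑ x, ind (W : Set (Fin n → ZMod 2)) x * chi a x
        = ∑ x, ind (W : Set (Fin n → ZMod 2)) (x + w0) * chi a (x + w0) :=
      (Fintype.sum_equiv (Equiv.addRight w0) _ _ (fun x => rfl)).symm
    have hstep : ∀ x, ind (W : Set (Fin n → ZMod 2)) (x + w0) * chi a (x + w0)
        = -(ind (W : Set (Fin n → ZMod 2)) x * chi a x) := by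
      intro x
      have h1 : ind (W : Set (Fin n → ZMod 2)) (x + w0)
          = ind (W : Set (Fin n → ZMod 2)) x := by
        unfold ind
        have : x + w0 ∈ W ↔ x ∈ W := add_mem_cancel_right hw0
        simp only [SetLike.mem_coe, Set.mem_setOf_eq]
        by_cases hx : x ∈ W <;> simp [hx, this]
      rw [h1, ← chi_mul_chi a x w0, hchi]
      ring
    have hz : ∑ x, ind (W : Set (Fin n → ZMod 2)) x * chi a x = 0 := by
      have : ∑ x, ind (W : Set (Fin n → ZMod 2)) x * chi a x
          = - ∑ x, ind (W : Set (Fin n → ZMod 2)) x * chi a x := by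
        calc ∑ x, ind (W : Set (Fin n → ZMod 2)) x * chi a x
            = ∑ x, ind (W : Set (Fin n → ZMod 2)) (x + w0) * chi a (x + w0) := hre
          _ = ∑ x, -(ind (W : Set (Fin n → ZMod 2)) x * chi a x) :=
              Finset.sum_congr rfl fun x _ => hstep x
          _ = _ := by rw [Finset.sum_neg_distrib]
      linarith
    rw [hz, zero_div]

lemma fhat_ind_coset (c a : Fin n → ZMod 2) :
    fhat (ind {x | x - c ∈ W}) a = chi a c * fhat (ind (W : Set (Fin n → ZMod 2))) a := by
  unfold fhat
  rw [mul_div_assoc']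
  congr 1
  have hre : ∑ x, ind {x | x - c ∈ W} x * chi a x
      = ∑ x, ind {x | x - c ∈ W} (x + c) * chi a (x + c) :=
    (Fintype.sum_equiv (Equiv.addRight c) _ _ (fun x => rfl)).symm
  rw [hre, Finset.mul_sum]
  refine Finset.sum_congr rfl fun x _ => ?_
  have h1 : ind {x | x - c ∈ W} (x + c) = ind (W : Set (Fin n → ZMod 2)) x := by
    unfold ind
    simp [add_sub_cancel_right]
  rw [h1, ← chi_mul_chi a x c]
  ring

set_option maxHeartbeats 1000000 in
lemma specNorm_coset (c : Fin n → ZMod 2) :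
    specNorm (ind {x | x - c ∈ W}) = 1 := by
  set cW : ℕ := (Finset.univ.filter (fun x => x ∈ W)).card with hcW
  set cK : ℕ := (Finset.univ.filter
      (fun a : Fin n → ZMod 2 => ∀ w ∈ W, ∑ i, a i * w i = 0)).card with hcK
  have hWpos : 0 < cW := by
    rw [hcW, Finset.card_pos]
    exact ⟨0, by simp [W.zero_mem]⟩
  have hP : (0 : ℝ) < 2 ^ n := by positivity
  -- Parseval applied to ind W
  have hpars : (cK : ℝ) * ((cW : ℝ) / 2 ^ n) ^ 2 = (cW : ℝ) / 2 ^ n := by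
    have h1 := parseval (ind (W : Set (Fin n → ZMod 2)))
    have h2 : ∑ a, (fhat (ind (W : Set (Fin n → ZMod 2))) a) ^ 2
        = (cK : ℝ) * ((cW : ℝ) / 2 ^ n) ^ 2 := by
      calc ∑ a, (fhat (ind (W : Set (Fin n → ZMod 2))) a) ^ 2
          = ∑ a : Fin n → ZMod 2, (if (∀ w ∈ W, ∑ i, a i * w i = 0) then
              ((cW : ℝ) / 2 ^ n) ^ 2 else 0) := by
            refine Finset.sum_congr rfl fun a _ => ?_
            rw [fhat_ind_W W a]
            split
            · rfl
            · simp
        _ = _ := by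
            rw [Finset.sum_ite, Finset.sum_const, Finset.sum_const_zero, add_zero,
              nsmul_eq_mul]
    have h3 : (∑ x, (ind (W : Set (Fin n → ZMod 2)) x) ^ 2) = (cW : ℝ) := by
      rw [← Finset.sum_boole]
      refine Finset.sum_congr rfl fun x _ => ?_
      unfold ind
      by_cases hx : x ∈ W <;> simp [hx]
    rw [h2, h3] at h1
    exact h1
  have hWpos' : (0 : ℝ) < cW := by exact_mod_cast hWpos
  have hq : (0 : ℝ) < (cW : ℝ) / 2 ^ n := by positivity
  have hKW : (cK : ℝ) * ((cW : ℝ) / 2 ^ n) = 1 := by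
    refine mul_right_cancel₀ (ne_of_gt hq) ?_
    rw [one_mul, mul_assoc, ← pow_two]
    exact hpars
  -- now compute specNorm
  unfold specNorm
  calc ∑ a, |fhat (ind {x | x - c ∈ W}) a|
      = ∑ a, |fhat (ind (W : Set (Fin n → ZMod 2))) a| := by
        refine Finset.sum_congr rfl fun a _ => ?_
        rw [fhat_ind_coset W c a, abs_mul, abs_chi, one_mul]
    _ = ∑ a : Fin n → ZMod 2, (if (∀ w ∈ W, ∑ i, a i * w i = 0) then
          ((cW : ℝ) / 2 ^ n) else 0) := by
        refine Finset.sum_congr rfl fun a _ => ?_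
        rw [fhat_ind_W W a]
        split
        · rw [abs_of_nonneg (by positivity)]
        · simp
    _ = (cK : ℝ) * ((cW : ℝ) / 2 ^ n) := by
        rw [Finset.sum_ite, Finset.sum_const, Finset.sum_const_zero, add_zero,
          nsmul_eq_mul]
    _ = 1 := hKW

end coset


section comb
variable {α : Type*} {t : ℕ}

lemma ring_pattern (C : Fin t → Set α) {A : Set α}
    (h : InSetRing (Set.range C) A) :
    ∃ P : Set ((Fin t) → Prop), A = (fun x => fun i => x ∈ C i) ⁻¹' P := by
  induction h with
  | base hA =>
      obtain ⟨j, rfl⟩ := hA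
      exact ⟨{p | p j}, by ext x; simp [Set.preimage]⟩
  | univ => exact ⟨Set.univ, by simp⟩
  | compl _ ih =>
      obtain ⟨P, rfl⟩ := ih; exact ⟨Pᶜ, by rw [Set.preimage_compl]⟩
  | union _ _ ih1 ih2 =>
      obtain ⟨P, rfl⟩ := ih1; obtain ⟨Q, hQ⟩ := ih2
      exact ⟨P ∪ Q, by rw [Set.preimage_union, ← hQ]⟩
  | inter _ _ ih1 ih2 =>
      obtain ⟨P, rfl⟩ := ih1; obtain ⟨Q, hQ⟩ := ih2
      exact ⟨P ∩ Q, by rw [Set.preimage_inter, ← hQ]⟩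

lemma ind_eq_sum_atoms (C : Fin t → Set α) {A : Set α}
    (h : InSetRing (Set.range C) A) :
    ∃ S : Finset (Fin t → Bool), ∀ x,
      (if x ∈ A then (1 : ℝ) else 0) =
        ∑ σ ∈ S, ∏ i, (if σ i then (if x ∈ C i then (1 : ℝ) else 0)
          else 1 - (if x ∈ C i then (1 : ℝ) else 0)) := by
  obtain ⟨P, hP⟩ := ring_pattern C h
  refine ⟨Finset.univ.filter (fun σ => (fun i => σ i = true) ∈ P), fun x => ?_⟩
  set b : Fin t → Bool := fun i => decide (x ∈ C i) with hb
  have claim1 : ∀ σ : Fin t → Bool,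
      (∏ i, (if σ i then (if x ∈ C i then (1 : ℝ) else 0)
        else 1 - (if x ∈ C i then (1 : ℝ) else 0)))
      = if σ = b then 1 else 0 := by
    intro σ
    have factor : ∀ i, (if σ i then (if x ∈ C i then (1 : ℝ) else 0)
        else 1 - (if x ∈ C i then (1 : ℝ) else 0)) = if σ i = b i then 1 else 0 := by
      intro i
      by_cases hx : x ∈ C i
      · have hbi : b i = true := by rw [hb]; simp [hx]
        rw [hbi]
        cases hσ : σ i <;> simp [hx]
      · have hbi : b i = false := by rw [hb]; simp [hx]
        rw [hbi]
        cases hσ : σ i <;> simp [hx]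
    calc (∏ i, (if σ i then (if x ∈ C i then (1 : ℝ) else 0)
        else 1 - (if x ∈ C i then (1 : ℝ) else 0)))
        = ∏ i, (if σ i = b i then (1 : ℝ) else 0) :=
          Finset.prod_congr rfl fun i _ => factor i
      _ = if σ = b then 1 else 0 := by
          rw [Finset.prod_boole]
          by_cases hsb : σ = b
          · rw [if_pos hsb, if_pos (fun i _ => congrFun hsb i)]
          · rw [if_neg hsb, if_neg
              (fun hc => hsb (funext fun i => hc i (Finset.mem_univ i)))]
  rw [Finset.sum_congr rfl fun σ _ => claim1 σ, Finset.sum_ite_eq']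
  have hbS : ((fun i => b i = true) ∈ P) ↔ x ∈ A := by
    have : (fun i => b i = true) = (fun i => x ∈ C i) := by
      funext i; rw [hb]; simp
    rw [this, hP]; rfl
  by_cases hx : x ∈ A
  · rw [if_pos hx, if_pos (by simp [hbS, hx])]
  · rw [if_neg hx, if_neg (by simp [hbS, hx])]

end comb

section expand
variable {α : Type*} {t : ℕ}

noncomputable def vterm (C : Fin t → Set α) (i : Fin t) (j : Fin 3) (x : α) : ℝ :=
  if j = 0 then (if x ∈ C i then 1 else 0)
  else if j = 1 then 1 else -(if x ∈ C i then 1 else 0)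

def choice : Bool → Finset (Fin 3) := fun b => if b then {0} else {1, 2}

lemma factor_expand (C : Fin t → Set α) (σ : Fin t → Bool) (i : Fin t) (x : α) :
    (if σ i then (if x ∈ C i then (1 : ℝ) else 0)
      else 1 - (if x ∈ C i then (1 : ℝ) else 0))
      = ∑ j ∈ choice (σ i), vterm C i j x := by
  cases hσ : σ i
  · have hpair : ∑ j ∈ ({1, 2} : Finset (Fin 3)), vterm C i j x
        = vterm C i 1 x + vterm C i 2 x :=
      Finset.sum_pair (by decide)
    simp only [choice, Bool.false_eq_true, if_false]
    rw [hpair]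
    unfold vterm
    norm_num
    rw [if_neg (by decide : ¬(2 : Fin 3) = 0), if_neg (by decide : ¬(2 : Fin 3) = 1)]
    ring
  · simp only [choice, if_true, vterm]
    simp

noncomputable def epsτ (τ : Fin t → Fin 3) : ℝ := ∏ i, (if τ i = 2 then (-1 : ℝ) else 1)

def Dset (C : Fin t → Set α) (τ : Fin t → Fin 3) : Set α := {x | ∀ i, τ i ≠ 1 → x ∈ C i}

lemma eps_pm (τ : Fin t → Fin 3) : epsτ τ = 1 ∨ epsτ τ = -1 := by
  refine Finset.prod_induction _ (fun r => r = 1 ∨ r = -1) ?_ (Or.inl rfl) ?_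
  · rintro a b (ha | ha) (hb | hb) <;> rw [ha, hb] <;> norm_num
  · intro i _; split <;> simp

lemma prod_vterm (C : Fin t → Set α) (τ : Fin t → Fin 3) (x : α) :
    ∏ i, vterm C i (τ i) x = epsτ τ * (if x ∈ Dset C τ then 1 else 0) := by
  have tri : ∀ j : Fin 3, j = 0 ∨ j = 1 ∨ j = 2 := by decide
  have factor : ∀ i, vterm C i (τ i) x
      = (if τ i = 2 then (-1 : ℝ) else 1) * (if (τ i ≠ 1 → x ∈ C i) then 1 else 0) := by
    intro i
    rcases tri (τ i) with h | h | h <;> rw [h] <;> unfold vterm <;>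
      by_cases hx : x ∈ C i <;> simp [hx]
  rw [Finset.prod_congr rfl (fun i _ => factor i), Finset.prod_mul_distrib]
  unfold epsτ
  congr 1
  rw [Finset.prod_boole]
  by_cases hD : x ∈ Dset C τ
  · rw [if_pos hD, if_pos (fun i _ => hD i)]
  · rw [if_neg hD, if_neg (fun hc => hD (fun i hi => hc i (Finset.mem_univ i) hi))]

end expand

lemma dset_coset {n t : ℕ} (C : Fin t → Set (Fin n → ZMod 2))
    (hC : ∀ i, IsCoset (C i)) (τ : Fin t → Fin 3) (hne : (Dset C τ).Nonempty) :
    IsCoset (Dset C τ) := by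
  choose W c hWc using hC
  obtain ⟨e, he⟩ := hne
  refine ⟨⨅ (i : Fin t) (_ : τ i ≠ 1), W i, e, ?_⟩
  ext x
  simp only [Dset, Set.mem_setOf_eq, Submodule.mem_iInf]
  constructor
  · intro hx i hi
    have h1 : x - c i ∈ W i := by have := hx i hi; rwa [hWc i] at this
    have h2 : e - c i ∈ W i := by have := he i hi; rwa [hWc i] at this
    have h3 := (W i).sub_mem h1 h2
    have : (x - c i) - (e - c i) = x - e := by ring
    rwa [this] at h3
  · intro hx i hi
    rw [hWc i]
    have h2 : e - c i ∈ W i := by have := he i hi; rwa [hWc i] at this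
    have h3 := (W i).add_mem (hx i hi) h2
    have : (x - e) + (e - c i) = x - c i := by ring
    rwa [this] at h3

lemma main_rep {n t : ℕ} (C : Fin t → Set (Fin n → ZMod 2))
    (hC : ∀ i, IsCoset (C i)) {A : Set (Fin n → ZMod 2)}
    (h : InSetRing (Set.range C) A) :
    ∃ T : Finset (Fin t → Fin 3), (∀ τ ∈ T, IsCoset (Dset C τ)) ∧
      ∀ x, ind A x = ∑ τ ∈ T, epsτ τ * ind (Dset C τ) x := by
  obtain ⟨S, hS⟩ := ind_eq_sum_atoms C h
  set T0 := S.biUnion (fun σ => Fintype.piFinset (fun i => choice (σ i))) with hT0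
  have hdisj : (↑S : Set (Fin t → Bool)).PairwiseDisjoint
      (fun σ => Fintype.piFinset (fun i => choice (σ i))) := by
    intro σ1 _ σ2 _ hne
    refine Finset.disjoint_left.mpr fun τ h1 h2 => hne ?_
    funext i
    have m1 := Fintype.mem_piFinset.mp h1 i
    have m2 := Fintype.mem_piFinset.mp h2 i
    have key : ∀ (b1 b2 : Bool) (j : Fin 3), j ∈ choice b1 → j ∈ choice b2 → b1 = b2 := by
      decide
    exact key _ _ _ m1 m2
  have key : ∀ x, ind A x = ∑ τ ∈ T0, epsτ τ * ind (Dset C τ) x := by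
    intro x
    rw [show ind A x = (if x ∈ A then (1 : ℝ) else 0) from rfl, hS x]
    calc ∑ σ ∈ S, ∏ i, (if σ i then (if x ∈ C i then (1 : ℝ) else 0)
          else 1 - (if x ∈ C i then (1 : ℝ) else 0))
        = ∑ σ ∈ S, ∑ τ ∈ Fintype.piFinset (fun i => choice (σ i)),
            ∏ i, vterm C i (τ i) x := by
          refine Finset.sum_congr rfl fun σ _ => ?_
          rw [Finset.prod_congr rfl (fun i _ => factor_expand C σ i x),
            Finset.prod_univ_sum]
      _ = ∑ τ ∈ T0, ∏ i, vterm C i (τ i) x := (Finset.sum_biUnion hdisj).symm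
      _ = ∑ τ ∈ T0, epsτ τ * ind (Dset C τ) x :=
          Finset.sum_congr rfl fun τ _ => prod_vterm C τ x
  refine ⟨T0.filter (fun τ => (Dset C τ).Nonempty),
    fun τ hτ => dset_coset C hC τ (Finset.mem_filter.mp hτ).2, fun x => ?_⟩
  rw [key x]
  refine (Finset.sum_subset (Finset.filter_subset _ _) ?_).symm
  intro τ hτ0 hτ
  have hem : Dset C τ = ∅ := by
    rw [← Set.not_nonempty_iff_eq_empty]
    intro hcon
    exact hτ (Finset.mem_filter.mpr ⟨hτ0, hcon⟩)
  rw [hem]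
  simp [ind]

lemma fhat_sum_rep {n m : ℕ} (ε : Fin m → ℝ) (g : Fin m → (Fin n → ZMod 2) → ℝ)
    (f : (Fin n → ZMod 2) → ℝ) (hf : ∀ x, f x = ∑ i, ε i * g i x) (a : Fin n → ZMod 2) :
    fhat f a = ∑ i, ε i * fhat (g i) a := by
  unfold fhat
  rw [show (∑ x, f x * chi a x) = ∑ x, ∑ i, ε i * g i x * chi a x from
    Finset.sum_congr rfl fun x _ => by rw [hf x, Finset.sum_mul]]
  rw [Finset.sum_comm, Finset.sum_div]
  refine Finset.sum_congr rfl fun i _ => ?_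
  have : ∑ x, ε i * g i x * chi a x = ε i * ∑ x, g i x * chi a x := by
    rw [Finset.mul_sum]
    exact Finset.sum_congr rfl fun x _ => by ring
  rw [this, mul_div_assoc]

theorem stmt4 {n : ℕ} (A : Set (Fin n → ZMod 2)) (ℓ : ℕ) (h : CosetCplxLe A ℓ) :
    (∃ (t : ℕ) (ε : Fin t → ℝ) (C : Fin t → Set (Fin n → ZMod 2)),
      t ≤ 3 ^ ℓ ∧ (∀ i, ε i = 1 ∨ ε i = -1) ∧ (∀ i, IsCoset (C i)) ∧
        ∀ x, ind A x = ∑ i, ε i * ind (C i) x) ∧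
      specNorm (ind A) ≤ 3 ^ ℓ := by
  obtain ⟨t, C, htℓ, hC, hring⟩ := h
  obtain ⟨T, hTcoset, hTrep⟩ := main_rep C hC hring
  set m := T.card with hm
  set e := T.equivFin with he
  set ε' : Fin m → ℝ := fun i => epsτ ((e.symm i : ↥T) : Fin t → Fin 3) with hε'
  set C' : Fin m → Set (Fin n → ZMod 2) :=
    fun i => Dset C ((e.symm i : ↥T) : Fin t → Fin 3) with hC'
  have hmle : m ≤ 3 ^ ℓ := by
    calc m ≤ Fintype.card (Fin t → Fin 3) := Finset.card_le_univ T
      _ = 3 ^ t := by simp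
      _ ≤ 3 ^ ℓ := Nat.pow_le_pow_right (by norm_num) htℓ
  have hεpm : ∀ i, ε' i = 1 ∨ ε' i = -1 := fun i => eps_pm _
  have hC'coset : ∀ i, IsCoset (C' i) := fun i => hTcoset _ (e.symm i).2
  have hrep : ∀ x, ind A x = ∑ i, ε' i * ind (C' i) x := by
    intro x
    rw [hTrep x, ← Finset.sum_coe_sort T (fun τ => epsτ τ * ind (Dset C τ) x)]
    exact (Equiv.sum_comp e.symm
      (fun τ : ↥T => epsτ (τ : Fin t → Fin 3) * ind (Dset C (τ : Fin t → Fin 3)) x)).symm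
  have hsn : ∀ i, specNorm (ind (C' i)) = 1 := by
    intro i
    obtain ⟨W, c, hWc⟩ := hC'coset i
    rw [hWc]
    exact specNorm_coset W c
  constructor
  · exact ⟨m, ε', C', hmle, hεpm, hC'coset, hrep⟩
  · have hb : specNorm (ind A) ≤ (m : ℝ) := by
      calc specNorm (ind A)
          = ∑ a, |∑ i, ε' i * fhat (ind (C' i)) a| := by
            unfold specNorm
            exact Finset.sum_congr rfl fun a _ => by
              rw [fhat_sum_rep ε' (fun i => ind (C' i)) (ind A) hrep a]
        _ ≤ ∑ a, ∑ i, |ε' i * fhat (ind (C' i)) a| :=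
            Finset.sum_le_sum fun a _ => Finset.abs_sum_le_sum_abs _ _
        _ = ∑ i, ∑ a, |ε' i| * |fhat (ind (C' i)) a| := by
            rw [Finset.sum_comm]
            exact Finset.sum_congr rfl fun i _ =>
              Finset.sum_congr rfl fun a _ => abs_mul _ _
        _ = ∑ i, |ε' i| * specNorm (ind (C' i)) := by
            refine Finset.sum_congr rfl fun i _ => ?_
            unfold specNorm
            rw [Finset.mul_sum]
        _ = ∑ i : Fin m, (1 : ℝ) := by
            refine Finset.sum_congr rfl fun i _ => ?_
            rw [hsn i]
            rcases hεpm i with hh | hh <;> rw [hh] <;> norm_num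
        _ = (m : ℝ) := by simp
    calc specNorm (ind A) ≤ (m : ℝ) := hb
      _ ≤ ((3 ^ ℓ : ℕ) : ℝ) := by exact_mod_cast hmle
      _ = (3 : ℝ) ^ ℓ := by push_cast; ring
end

section
/- Let A ⊆ F_2^n, ε ∈ [0, 1/2), δ ∈ (0, 1/2), and g : F_2^n → ℝ with ‖1_A − g‖_∞ ≤ ε. Suppose W is a subgroup and there exist c₁, c₂ ∈ F_2^n with E[1_A | W + c₁] ≥ 1 − δ and E[1_A | W + c₂] ≤ δ. Then ∑_{r ∈ W^⊥, r ≠ 0} |ĝ(r)| ≥ (1 − 2ε − 2δ)/2. -/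
open Finset
open scoped Classical

noncomputable def cosetAvg {n : ℕ} (f : (Fin n → ZMod 2) → ℝ)
    (W : Submodule (ZMod 2) (Fin n → ZMod 2)) (c : Fin n → ZMod 2) : ℝ :=
  (∑ x ∈ univ.filter (fun x : Fin n → ZMod 2 => x - c ∈ W), f x) /
    (univ.filter (fun x : Fin n → ZMod 2 => x - c ∈ W)).card

section Aux

variable {n : ℕ}

lemma zmod2_cases : ∀ a : ZMod 2, a = 0 ∨ a = 1 := by decide

lemma B_add_right (r x y : Fin n → ZMod 2) :
    ∑ i, r i * (x + y) i = (∑ i, r i * x i) + ∑ i, r i * y i := by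
  simp [mul_add, Finset.sum_add_distrib]

lemma B_add_left (r s x : Fin n → ZMod 2) :
    ∑ i, (r + s) i * x i = (∑ i, r i * x i) + ∑ i, s i * x i := by
  simp [add_mul, Finset.sum_add_distrib]

lemma B_comm (r x : Fin n → ZMod 2) : ∑ i, r i * x i = ∑ i, x i * r i := by
  simp [mul_comm]

lemma chi_ite (a b : ZMod 2) :
    (if a + b = 0 then (1:ℝ) else -1) = (if a = 0 then (1:ℝ) else -1) * (if b = 0 then (1:ℝ) else -1) := by
  rcases zmod2_cases a with ha | ha <;> rcases zmod2_cases b with hb | hb <;>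
    subst ha <;> subst hb <;> simp [show (1:ZMod 2)+1 = 0 from by decide]

lemma chi_add_right (r x y : Fin n → ZMod 2) : chi r (x + y) = chi r x * chi r y := by
  unfold chi
  rw [B_add_right, chi_ite]

lemma chi_add_left (r s x : Fin n → ZMod 2) : chi (r + s) x = chi r x * chi s x := by
  unfold chi
  rw [B_add_left, chi_ite]

lemma chi_comm (r x : Fin n → ZMod 2) : chi r x = chi x r := by
  unfold chi; rw [B_comm]

lemma chi_neg_of_ne (r x : Fin n → ZMod 2) (h : ∑ i, r i * x i ≠ 0) : chi r x = -1 := by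
  unfold chi; rw [if_neg h]

lemma chi_one_of_eq (r x : Fin n → ZMod 2) (h : ∑ i, r i * x i = 0) : chi r x = 1 := by
  unfold chi; rw [if_pos h]

lemma sub_eq_add' (x c : Fin n → ZMod 2) : x - c = x + c := by
  funext i
  have : ∀ a b : ZMod 2, a - b = a + b := by decide
  exact this _ _

/-- Generic vanishing of a character sum over a set closed under translation by `r₀`. -/
lemma sum_chi_eq_zero {S : Finset (Fin n → ZMod 2)} {y r₀ : Fin n → ZMod 2}
    (hcl : ∀ r, r ∈ S ↔ r + r₀ ∈ S) (hB : ∑ i, r₀ i * y i ≠ 0) :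
    ∑ r ∈ S, chi r y = 0 := by
  have hinv : ∀ r : Fin n → ZMod 2, r + r₀ + r₀ = r := by
    intro r; funext i
    have : ∀ a b : ZMod 2, a + b + b = a := by decide
    exact this _ _
  have key : ∑ r ∈ S, chi r y = ∑ r ∈ S, chi (r + r₀) y := by
    apply Finset.sum_nbij' (i := fun r => r + r₀) (j := fun r => r + r₀)
    · intro a ha; exact (hcl a).1 ha
    · intro a ha; rw [← hinv a] at ha; exact (hcl (a + r₀)).2 ha
    · intro a _; exact hinv a
    · intro a _; exact hinv a
    · intro a _; rw [hinv]
  have : ∑ r ∈ S, chi (r + r₀) y = -∑ r ∈ S, chi r y := by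
    rw [← Finset.sum_neg_distrib]
    apply Finset.sum_congr rfl
    intro r _
    rw [chi_add_left, chi_neg_of_ne _ _ hB]; ring
  linarith [key, this]

end Aux


section Main

variable {n : ℕ} (W : Submodule (ZMod 2) (Fin n → ZMod 2))

/-- The annihilator finset. -/
noncomputable def annih : Finset (Fin n → ZMod 2) :=
  univ.filter (fun r : Fin n → ZMod 2 => ∀ w ∈ W, ∑ i, r i * w i = (0 : ZMod 2))

lemma mem_annih {r : Fin n → ZMod 2} :
    r ∈ annih W ↔ ∀ w ∈ W, ∑ i, r i * w i = (0 : ZMod 2) := by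
  simp [annih]

lemma zero_mem_annih : 0 ∈ annih W := by
  rw [mem_annih]; intro w _; simp

lemma charSum (y : Fin n → ZMod 2) :
    ∑ r ∈ annih W, chi r y = if y ∈ W then ((annih W).card : ℝ) else 0 := by
  by_cases hy : y ∈ W
  · rw [if_pos hy]
    rw [Finset.sum_congr rfl (fun r hr => chi_one_of_eq r y ((mem_annih W).1 hr y hy))]
    simp
  · rw [if_neg hy]
    obtain ⟨φ, hφy, hφW⟩ := W.exists_dual_map_eq_bot_of_notMem hy inferInstance
    set r₀ : Fin n → ZMod 2 := fun i => φ (fun j => if i = j then 1 else 0) with hr₀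
    have hφeq : ∀ x : Fin n → ZMod 2, ∑ i, r₀ i * x i = φ x := by
      intro x
      rw [B_comm]
      rw [LinearMap.pi_apply_eq_sum_univ φ x]
      simp [hr₀, smul_eq_mul]
    have hr₀mem : r₀ ∈ annih W := by
      rw [mem_annih]
      intro w hw
      rw [hφeq]
      have : φ w ∈ W.map φ := Submodule.mem_map_of_mem hw
      rw [hφW] at this
      exact (Submodule.mem_bot (ZMod 2)).1 this
    apply sum_chi_eq_zero (r₀ := r₀)
    · intro r
      constructor
      · intro hr
        rw [mem_annih] at *
        intro w hw
        rw [B_add_left, hr w hw, hr₀mem w hw, add_zero]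
      · intro hr
        rw [mem_annih] at *
        intro w hw
        have h1 := hr w hw
        rw [B_add_left, hr₀mem w hw, add_zero] at h1
        exact h1
    · rw [hφeq]; exact hφy

lemma sum_chi_univ (r : Fin n → ZMod 2) :
    ∑ x, chi r x = if r = 0 then ((2:ℝ) ^ n) else 0 := by
  by_cases hr : r = 0
  · subst hr
    rw [if_pos rfl]
    have : ∀ x : Fin n → ZMod 2, chi 0 x = 1 := by
      intro x; apply chi_one_of_eq; simp
    rw [Finset.sum_congr rfl (fun x _ => this x)]
    simp [Fintype.card_fun]
  · rw [if_neg hr]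
    obtain ⟨i, hi⟩ : ∃ i, r i ≠ 0 := by
      by_contra h
      push_neg at h
      exact hr (funext fun i => h i)
    have : ∑ x, chi r x = ∑ x, chi x r := by
      exact Finset.sum_congr rfl (fun x _ => chi_comm r x)
    rw [this]
    apply sum_chi_eq_zero (r₀ := fun j => if j = i then 1 else 0)
    · intro x; simp
    · simpa using hi

lemma card_annih_mul : ((annih W).card : ℝ) * ((univ.filter (· ∈ W)).card : ℝ) = 2 ^ n := by
  have h1 : ∑ r ∈ annih W, ∑ x, chi r x = (2:ℝ) ^ n := by
    rw [Finset.sum_congr rfl (fun r _ => sum_chi_univ r)]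
    rw [Finset.sum_ite_eq' (annih W) 0 (fun _ => (2:ℝ)^n)]
    rw [if_pos (zero_mem_annih W)]
  have h2 : ∑ x : Fin n → ZMod 2, ∑ r ∈ annih W, chi r x
      = ((annih W).card : ℝ) * ((univ.filter (· ∈ W)).card : ℝ) := by
    rw [Finset.sum_congr rfl (fun x _ => charSum W x)]
    rw [← Finset.sum_filter]
    simp [mul_comm]
  rw [← h2, Finset.sum_comm, h1]

lemma card_coset (c : Fin n → ZMod 2) :
    (univ.filter (fun x : Fin n → ZMod 2 => x - c ∈ W)).card
      = (univ.filter (· ∈ W)).card := by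
  apply Finset.card_bij' (i := fun x _ => x - c) (j := fun w _ => w + c)
  · intro a ha; simp only [Finset.mem_filter, Finset.mem_univ, true_and] at *; exact ha
  · intro a ha; simp only [Finset.mem_filter, Finset.mem_univ, true_and] at *
    simpa using ha
  · intro a _; simp [sub_add_cancel]
  · intro a _; simp [add_sub_cancel_right]

lemma Wcard_pos : 0 < ((univ.filter (· ∈ W)).card : ℝ) := by
  have : (0 : Fin n → ZMod 2) ∈ univ.filter (· ∈ W) := by simp [W.zero_mem]
  have := Finset.card_pos.2 ⟨0, this⟩
  exact_mod_cast this

lemma cosetAvg_eq_sum (g : (Fin n → ZMod 2) → ℝ) (c : Fin n → ZMod 2) :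
    cosetAvg g W c = ∑ r ∈ annih W, fhat g r * chi r c := by
  have key : ∑ r ∈ annih W, fhat g r * chi r c
      = (((annih W).card : ℝ) * ∑ x ∈ univ.filter (fun x : Fin n → ZMod 2 => x - c ∈ W), g x)
        / 2 ^ n := by
    unfold fhat
    have e0 : ∀ r ∈ annih W, (∑ x, g x * chi r x) / 2 ^ n * chi r c
        = (∑ x, g x * chi r x * chi r c) / 2 ^ n := by
      intro r _
      rw [div_mul_eq_mul_div, Finset.sum_mul]
    rw [Finset.sum_congr rfl e0]
    rw [← Finset.sum_div]
    congr 1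
    rw [Finset.sum_comm]
    have step : ∀ x : Fin n → ZMod 2, ∑ r ∈ annih W, g x * chi r x * chi r c
        = g x * (if x - c ∈ W then ((annih W).card : ℝ) else 0) := by
      intro x
      rw [← charSum W (x - c), Finset.mul_sum]
      apply Finset.sum_congr rfl
      intro r _
      rw [sub_eq_add', chi_add_right]
      ring
    rw [Finset.sum_congr rfl (fun x _ => step x)]
    rw [← Finset.sum_filter_add_sum_filter_not univ (fun x => x - c ∈ W)]
    have : ∑ x ∈ univ.filter (fun x => ¬ (x - c ∈ W)),
        g x * (if x - c ∈ W then ((annih W).card : ℝ) else 0) = 0 := by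
      apply Finset.sum_eq_zero
      intro x hx
      simp only [Finset.mem_filter] at hx
      rw [if_neg hx.2, mul_zero]
    rw [this, add_zero, Finset.mul_sum]
    apply Finset.sum_congr rfl
    intro x hx
    simp only [Finset.mem_filter] at hx
    rw [if_pos hx.2]; ring
  rw [key]
  unfold cosetAvg
  rw [card_coset]
  rw [div_eq_div_iff (Wcard_pos W).ne' (by positivity : (0:ℝ) < 2 ^ n).ne']
  rw [← card_annih_mul W]
  ring

lemma cosetAvg_close (A : Set (Fin n → ZMod 2)) (ε : ℝ) (g : (Fin n → ZMod 2) → ℝ)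
    (hg : ∀ x, |ind A x - g x| ≤ ε) (c : Fin n → ZMod 2) :
    |cosetAvg (ind A) W c - cosetAvg g W c| ≤ ε := by
  have hε0 : 0 ≤ ε := le_trans (abs_nonneg _) (hg c)
  set s := univ.filter (fun x : Fin n → ZMod 2 => x - c ∈ W) with hs
  have hm : (0:ℝ) < s.card := by rw [hs, card_coset]; exact Wcard_pos W
  unfold cosetAvg
  rw [← hs, div_sub_div_same, ← Finset.sum_sub_distrib]
  rw [abs_div, abs_of_pos hm, div_le_iff₀ hm]
  calc |∑ x ∈ s, (ind A x - g x)| ≤ ∑ x ∈ s, |ind A x - g x| := Finset.abs_sum_le_sum_abs _ _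
    _ ≤ ∑ _x ∈ s, ε := Finset.sum_le_sum (fun x _ => hg x)
    _ = ε * s.card := by rw [Finset.sum_const, nsmul_eq_mul, mul_comm]

end Main

theorem stmt13 {n : ℕ} (A : Set (Fin n → ZMod 2)) (ε δ : ℝ)
    (hε0 : 0 ≤ ε) (hε : ε < 1 / 2) (hδ0 : 0 < δ) (hδ : δ < 1 / 2)
    (g : (Fin n → ZMod 2) → ℝ) (hg : ∀ x, |ind A x - g x| ≤ ε)
    (W : Submodule (ZMod 2) (Fin n → ZMod 2)) (c₁ c₂ : Fin n → ZMod 2)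
    (h₁ : cosetAvg (ind A) W c₁ ≥ 1 - δ) (h₂ : cosetAvg (ind A) W c₂ ≤ δ) :
    ∑ r ∈ (univ.filter
        (fun r : Fin n → ZMod 2 => ∀ w ∈ W, ∑ i, r i * w i = (0 : ZMod 2))).erase 0,
      |fhat g r| ≥ (1 - 2 * ε - 2 * δ) / 2 := by
  have hT : (univ.filter
      (fun r : Fin n → ZMod 2 => ∀ w ∈ W, ∑ i, r i * w i = (0 : ZMod 2))) = annih W := rfl
  rw [hT]
  have e1 : cosetAvg g W c₁ ≥ 1 - δ - ε := by
    have h := cosetAvg_close W A ε g hg c₁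
    rw [abs_le] at h
    linarith [h.1]
  have e2 : cosetAvg g W c₂ ≤ δ + ε := by
    have h := cosetAvg_close W A ε g hg c₂
    rw [abs_le] at h
    linarith [h.2]
  have hD : cosetAvg g W c₁ - cosetAvg g W c₂
      = ∑ r ∈ annih W, fhat g r * (chi r c₁ - chi r c₂) := by
    rw [cosetAvg_eq_sum, cosetAvg_eq_sum, ← Finset.sum_sub_distrib]
    apply Finset.sum_congr rfl
    intro r _; ring
  have hzero : fhat g 0 * (chi 0 c₁ - chi 0 c₂) = 0 := by
    rw [chi_one_of_eq 0 c₁ (by simp), chi_one_of_eq 0 c₂ (by simp)]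
    ring
  have hD' : cosetAvg g W c₁ - cosetAvg g W c₂
      = ∑ r ∈ (annih W).erase 0, fhat g r * (chi r c₁ - chi r c₂) := by
    rw [hD, ← Finset.sum_erase (annih W) hzero]
  have hbound : ∑ r ∈ (annih W).erase 0, fhat g r * (chi r c₁ - chi r c₂)
      ≤ 2 * ∑ r ∈ (annih W).erase 0, |fhat g r| := by
    calc ∑ r ∈ (annih W).erase 0, fhat g r * (chi r c₁ - chi r c₂)
        ≤ ∑ r ∈ (annih W).erase 0, |fhat g r * (chi r c₁ - chi r c₂)| :=
          Finset.sum_le_sum (fun r _ => le_abs_self _)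
      _ ≤ ∑ r ∈ (annih W).erase 0, |fhat g r| * 2 := by
          apply Finset.sum_le_sum
          intro r _
          rw [abs_mul]
          apply mul_le_mul_of_nonneg_left _ (abs_nonneg _)
          have hc : ∀ y : Fin n → ZMod 2, |chi r y| ≤ 1 := by
            intro y; unfold chi; split <;> simp
          calc |chi r c₁ - chi r c₂| ≤ |chi r c₁| + |chi r c₂| := abs_sub _ _
            _ ≤ 2 := by linarith [hc c₁, hc c₂]
      _ = 2 * ∑ r ∈ (annih W).erase 0, |fhat g r| := by
          rw [Finset.mul_sum]; apply Finset.sum_congr rfl; intro r _; ring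
  have : 1 - 2 * ε - 2 * δ ≤ 2 * ∑ r ∈ (annih W).erase 0, |fhat g r| := by
    have := hD' ▸ hbound
    linarith
  linarith
end
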